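/- Let q be a real number with 0 < q < 1. On the ℂ-vector space of Laurent polynomials in one variable ζ over ℂ, define the ℂ-linear operators E, F, K, K' by their action on the monomials ζ^k (k ∈ ℤ): E(ζ^k) = −q·((1 − q^{2k})/(1 − q²))·ζ^{k+1}, F(ζ^k) = ((q^{-2k} − 1)/(q^{-2} − 1))·ζ^{k−1}, K(ζ^k) = q^{-2k}·ζ^k, K'(ζ^k) = q^{2k}·ζ^k. Then K∘K' = K'∘K = id, K∘E = q^{-2}·E∘K, K∘F = q²·F∘K, and E∘F − F∘E = (K − K')/(q^{-1} − q). -/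

import Mathlib

open LaurentPolynomial

lemma laurent_lhom_ext_T {f g : LaurentPolynomial ℂ →ₗ[ℂ] LaurentPolynomial ℂ}
    (h : ∀ k : ℤ, f (T k) = g (T k)) : f = g := by
  apply AddMonoidAlgebra.lhom_ext'
  intro k
  apply LinearMap.ext_ring
  exact h k

/-- the q-difference operators `E`, `F`, `K`, `K' = K⁻¹`, defined
on Laurent polynomials by their action on the monomials `ζ^k`, satisfy the
defining relations of `U_q(sl(2))`. -/
theorem uqsl2_relations_on_laurent
    (q : ℝ) (hq0 : 0 < q) (hq1 : q < 1)
    (E F K K' : LaurentPolynomial ℂ →ₗ[ℂ] LaurentPolynomial ℂ)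
    (hE : ∀ k : ℤ, E (T k) =
      (-(q : ℂ) * ((1 - (q : ℂ) ^ (2 * k)) / (1 - (q : ℂ) ^ 2))) • T (k + 1))
    (hF : ∀ k : ℤ, F (T k) =
      ((((q : ℂ) ^ (-(2 * k)) - 1)) / ((q : ℂ) ^ (-2 : ℤ) - 1)) • T (k - 1))
    (hK : ∀ k : ℤ, K (T k) = ((q : ℂ) ^ (-(2 * k))) • T k)
    (hK' : ∀ k : ℤ, K' (T k) = ((q : ℂ) ^ (2 * k)) • T k) :
    K ∘ₗ K' = LinearMap.id ∧
    K' ∘ₗ K = LinearMap.id ∧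
    K ∘ₗ E = ((q : ℂ) ^ (-2 : ℤ)) • (E ∘ₗ K) ∧
    K ∘ₗ F = ((q : ℂ) ^ 2) • (F ∘ₗ K) ∧
    E ∘ₗ F - F ∘ₗ E = (((q : ℂ))⁻¹ - (q : ℂ))⁻¹ • (K - K') := by
  set c : ℂ := (q : ℂ) with hc
  have hc0 : c ≠ 0 := by
    rw [hc]; exact_mod_cast hq0.ne'
  have hsq : c ^ (2 : ℕ) ≠ 1 := by
    intro h
    have h2 : ((q ^ 2 : ℝ) : ℂ) = ((1 : ℝ) : ℂ) := by push_cast; rw [← hc]; exact h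
    have : q ^ 2 = 1 := Complex.ofReal_injective h2
    nlinarith
  have hsub : (1 : ℂ) - c ^ 2 ≠ 0 := by
    intro h; exact hsq (by linear_combination -h)
  have hzk : ∀ k : ℤ, c ^ k ≠ 0 := fun k => zpow_ne_zero k hc0
  have hden : c ^ (-2 : ℤ) - 1 ≠ 0 := by
    rw [zpow_neg, sub_ne_zero]
    intro h
    have : c ^ (2 : ℤ) = 1 := by
      field_simp at h
      simpa using h.symm
    exact hsq (by rw [← this]; norm_cast)
  have hinv : c⁻¹ - c ≠ 0 := by
    rw [sub_ne_zero]
    intro h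
    have : c ^ 2 = 1 := by
      field_simp at h
      linear_combination -h
    exact hsq (by rw [← this])
  have hadd : ∀ a b : ℤ, c ^ (a + b) = c ^ a * c ^ b := fun a b => zpow_add₀ hc0 a b
  refine ⟨?_, ?_, ?_, ?_, ?_⟩
  · apply laurent_lhom_ext_T
    intro k
    simp [hK, hK', map_smul, smul_smul, mul_inv_cancel₀ (hzk (2 * k)),
      inv_mul_cancel₀ (hzk (2 * k))]
  · apply laurent_lhom_ext_T
    intro k
    simp [hK, hK', map_smul, smul_smul, mul_inv_cancel₀ (hzk (2 * k)),
      inv_mul_cancel₀ (hzk (2 * k))]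
  · apply laurent_lhom_ext_T
    intro k
    simp only [LinearMap.comp_apply, LinearMap.smul_apply, hE, hK, map_smul, smul_smul]
    congr 1
    have e1 : c ^ (-(2 * (k + 1))) = c ^ (-(2 * k)) * c ^ (-2 : ℤ) := by
      rw [← hadd]; ring_nf
    rw [e1]; ring
  · apply laurent_lhom_ext_T
    intro k
    simp only [LinearMap.comp_apply, LinearMap.smul_apply, hF, hK, map_smul, smul_smul]
    congr 1
    have e1 : c ^ (-(2 * (k - 1))) = c ^ (-(2 * k)) * c ^ (2 : ℤ) := by
      rw [← hadd]; ring_nf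
    have e2 : c ^ (2 : ℤ) = c ^ (2 : ℕ) := by norm_cast
    rw [e1, e2]; ring
  · apply laurent_lhom_ext_T
    intro k
    simp only [LinearMap.sub_apply, LinearMap.comp_apply, LinearMap.smul_apply, hE, hF, hK,
      hK', map_smul, map_sub, smul_smul]
    have h1 : k - 1 + 1 = k := by ring
    have h2 : k + 1 - 1 = k := by ring
    rw [h1, h2, smul_sub, smul_smul, smul_smul, ← sub_smul, ← sub_smul]
    congr 1
    have e1 : c ^ (2 * (k - 1)) = c ^ (2 * k) * c ^ (-2 : ℤ) := by rw [← hadd]; ring_nf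
    have e2 : c ^ (-(2 * (k + 1))) = c ^ (-(2 * k)) * c ^ (-2 : ℤ) := by rw [← hadd]; ring_nf
    have e3 : c ^ (-(2 * k)) = (c ^ (2 * k))⁻¹ := by rw [zpow_neg]
    have e4 : c ^ (-2 : ℤ) = (c ^ (2 : ℕ))⁻¹ := by rw [zpow_neg]; norm_cast
    rw [e1, e2, e3, e4]
    have hu : c ^ (2 * k) ≠ 0 := hzk _
    generalize c ^ (2 * k) = u at hu ⊢
    have hcc : c ^ 2 ≠ 0 := pow_ne_zero 2 hc0
    have hD : u ^ 2 * c ^ 4 - u ^ 2 * c ^ 6 * 4 + (u ^ 2 * c ^ 8 * 6 - u ^ 2 * c ^ 10 * 4)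
        + u ^ 2 * c ^ 12 ≠ 0 := by
      intro h0
      apply mul_ne_zero (mul_ne_zero (pow_ne_zero 2 hu) (pow_ne_zero 4 hc0)) (pow_ne_zero 4 hsub)
      linear_combination h0
    have r1 : (c ^ 2)⁻¹ - 1 = (1 - c ^ 2) / c ^ 2 := by field_simp
    have r2 : (c⁻¹ - c)⁻¹ = c / (1 - c ^ 2) := by
      rw [show c⁻¹ - c = (1 - c ^ 2) / c by
        rw [eq_div_iff hc0, sub_mul, inv_mul_cancel₀ hc0]; ring, inv_div]
    have r3 : u⁻¹ - 1 = (1 - u) / u := by field_simp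
    have r4 : u⁻¹ * (c ^ 2)⁻¹ - 1 = (1 - u * c ^ 2) / (u * c ^ 2) := by
      field_simp
    have r5 : 1 - u * (c ^ 2)⁻¹ = (c ^ 2 - u) / c ^ 2 := by
      rw [eq_div_iff hcc, sub_mul, inv_mul_cancel_right₀ hcc]; ring
    rw [r1, r2, r3, r4, r5]
    rw [div_div_div_eq, div_div_div_eq, div_div]
    field_simp
    ring
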